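/- arXiv:2210.06511 — 3 statements merged into one kernel-verified Lean document; each statement's English description precedes it below -/
import Mathlib

section
/- Change of measure (sub-Gaussian form): Let X and Y be random variables over spaces 𝒳 and 𝒴, and let Y′ be a random variable with the same marginal distribution as Y such that Y′ is independent of X. Assume the joint distribution of (X,Y) is absolutely continuous with respect to the joint distribution of (X,Y′). Let f: 𝒳×𝒴 → [−1,1] be measurable with E_{X,Y′}[f(X,Y′)] = 0. Then |E_{X,Y}[f(X,Y)]| ≤ sqrt(2·I(X;Y)), where I(X;Y) denotes the mutual information between X and Y. -/
open MeasureTheory ProbabilityTheory Real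
open scoped ENNReal ProbabilityTheory

open Classical in
/-- Kullback-Leibler divergence between two measures, valued in `ℝ≥0∞`
(infinite when absolute continuity or integrability of the log-likelihood ratio fails). -/
noncomputable def klDiv {α : Type*} [MeasurableSpace α] (μ ν : Measure α) : ℝ≥0∞ :=
  if μ ≪ ν ∧ Integrable (llr μ ν) μ then ENNReal.ofReal (∫ x, llr μ ν x ∂μ) else ⊤

/-- Mutual information `I(X;Y) = D(P_{XY} ‖ P_X ⊗ P_Y)`. -/
noncomputable def mutualInfo {Ω α β : Type*} [MeasurableSpace Ω] [MeasurableSpace α]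
    [MeasurableSpace β] (μ : Measure Ω) (X : Ω → α) (Y : Ω → β) : ℝ≥0∞ :=
  klDiv (μ.map fun ω => (X ω, Y ω)) ((μ.map X).prod (μ.map Y))

lemma aux_integral_llr_nonneg {α : Type*} [MeasurableSpace α] {μ ν : Measure α}
    [IsProbabilityMeasure μ] [IsProbabilityMeasure ν] (hμν : μ ≪ ν)
    (h_int : Integrable (llr μ ν) μ) : 0 ≤ ∫ x, llr μ ν x ∂μ := by
  set g : α → ℝ := fun x ↦ (μ.rnDeriv ν x).toReal with hg
  have hg_pos : ∀ᵐ x ∂μ, 0 < g x := by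
    filter_upwards [Measure.rnDeriv_pos hμν, hμν.ae_le (μ.rnDeriv_lt_top ν)] with x h1 h2
    exact ENNReal.toReal_pos h1.ne' h2.ne
  -- lintegral of the inverse of rnDeriv is at most 1
  have hlint : ∫⁻ x, (μ.rnDeriv ν x)⁻¹ ∂μ ≤ 1 := by
    have h0 : ∫⁻ x, (μ.rnDeriv ν x)⁻¹ ∂(ν.withDensity (μ.rnDeriv ν)) ≤ 1 := by
      rw [lintegral_withDensity_eq_lintegral_mul _ (Measure.measurable_rnDeriv μ ν)
        (g := fun x => (μ.rnDeriv ν x)⁻¹) (Measure.measurable_rnDeriv μ ν).inv]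
      calc ∫⁻ a, (μ.rnDeriv ν * fun x => (μ.rnDeriv ν x)⁻¹) a ∂ν
          ≤ ∫⁻ _, 1 ∂ν := lintegral_mono fun x => ENNReal.mul_inv_le_one _
        _ = 1 := by simp
    rwa [Measure.withDensity_rnDeriv_eq μ ν hμν] at h0
  have h_ae_eq : ∀ᵐ x ∂μ, ENNReal.ofReal ((g x)⁻¹) = (μ.rnDeriv ν x)⁻¹ := by
    filter_upwards [Measure.rnDeriv_pos hμν, hμν.ae_le (μ.rnDeriv_lt_top ν)] with x h1 h2
    rw [hg]
    rw [← ENNReal.toReal_inv, ENNReal.ofReal_toReal]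
    simp [h1.ne']
  have h_inv_int : Integrable (fun x ↦ (g x)⁻¹) μ := by
    refine ⟨((Measure.measurable_rnDeriv μ ν).ennreal_toReal.inv).aestronglyMeasurable, ?_⟩
    rw [hasFiniteIntegral_iff_ofReal ?_]
    · calc ∫⁻ x, ENNReal.ofReal ((g x)⁻¹) ∂μ = ∫⁻ x, (μ.rnDeriv ν x)⁻¹ ∂μ :=
        lintegral_congr_ae h_ae_eq
      _ ≤ 1 := hlint
      _ < ⊤ := by simp
    · filter_upwards [hg_pos] with x hx using le_of_lt (by positivity)
  have h_int_le : ∫ x, (g x)⁻¹ ∂μ ≤ 1 := by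
    rw [integral_eq_lintegral_of_nonneg_ae ?_ h_inv_int.aestronglyMeasurable]
    · rw [lintegral_congr_ae h_ae_eq]
      calc (∫⁻ x, (μ.rnDeriv ν x)⁻¹ ∂μ).toReal ≤ (1 : ℝ≥0∞).toReal :=
        ENNReal.toReal_mono (by simp) hlint
      _ = 1 := by simp
    · filter_upwards [hg_pos] with x hx using le_of_lt (by positivity)
  have key : ∀ᵐ x ∂μ, -llr μ ν x ≤ (g x)⁻¹ - 1 := by
    filter_upwards [hg_pos] with x hx
    have h1 := Real.log_le_sub_one_of_pos (inv_pos.mpr hx)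
    rw [Real.log_inv] at h1
    have h2 : llr μ ν x = Real.log (g x) := rfl
    rw [h2]
    linarith
  have h_mono : ∫ x, -llr μ ν x ∂μ ≤ ∫ x, ((g x)⁻¹ - 1) ∂μ :=
    integral_mono_ae h_int.neg (h_inv_int.sub (integrable_const 1)) key
  rw [integral_neg, integral_sub h_inv_int (integrable_const 1)] at h_mono
  simp only [integral_const, measure_univ, probReal_univ, ENNReal.toReal_one, smul_eq_mul, one_mul] at h_mono
  linarith

lemma aux_dv {α : Type*} [MeasurableSpace α] {P Q : Measure α}
    [IsProbabilityMeasure P] [IsProbabilityMeasure Q] (hPQ : P ≪ Q)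
    (h_int : Integrable (llr P Q) P)
    {F : α → ℝ} (hF : Measurable F) (hb : ∀ x, F x ∈ Set.Icc (-1:ℝ) 1)
    (hzero : ∫ x, F x ∂Q = 0) {l : ℝ} (hl : 0 ≤ l) :
    l * ∫ x, F x ∂P ≤ ∫ x, llr P Q x ∂P + l^2/2 := by
  have hb1 : ∀ x, |F x| ≤ 1 := fun x => abs_le.mpr ⟨(hb x).1, (hb x).2⟩
  have hFi_P : Integrable F P :=
    ⟨hF.aestronglyMeasurable, HasFiniteIntegral.of_bounded (C := 1) (ae_of_all _ hb1)⟩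
  have hFi_Q : Integrable F Q :=
    ⟨hF.aestronglyMeasurable, HasFiniteIntegral.of_bounded (C := 1) (ae_of_all _ hb1)⟩
  have hexp : Integrable (fun x ↦ Real.exp (l * F x)) Q := by
    refine ⟨(hF.const_mul l).exp.aestronglyMeasurable,
      HasFiniteIntegral.of_bounded (C := Real.exp l) (ae_of_all _ fun x => ?_)⟩
    rw [Real.norm_eq_abs, abs_of_pos (Real.exp_pos _)]
    exact Real.exp_le_exp.mpr (by nlinarith [(hb x).2])
  have hfP : Integrable (fun x ↦ l * F x) P := hFi_P.const_mul l
  have hQt : P ≪ Q.tilted (fun x ↦ l * F x) := hPQ.trans (absolutelyContinuous_tilted hexp)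
  haveI : IsProbabilityMeasure (Q.tilted (fun x ↦ l * F x)) := isProbabilityMeasure_tilted hexp
  have h_int' : Integrable (llr P (Q.tilted fun x ↦ l * F x)) P :=
    integrable_llr_tilted_right hPQ hfP h_int hexp
  have h_eq := integral_llr_tilted_right hPQ hfP hexp h_int
  have h_nn := aux_integral_llr_nonneg hQt h_int'
  have hpt : ∀ x, Real.exp (l * F x) ≤ Real.cosh l + F x * Real.sinh l := by
    intro x
    have ht := hb x
    have hcvx := convexOn_exp.2 (Set.mem_univ l) (Set.mem_univ (-l))
      (by linarith [ht.1] : (0:ℝ) ≤ (1 + F x)/2) (by linarith [ht.2] : (0:ℝ) ≤ (1 - F x)/2)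
      (by ring)
    simp only [smul_eq_mul] at hcvx
    have harg : (1 + F x)/2 * l + (1 - F x)/2 * (-l) = l * F x := by ring
    rw [harg] at hcvx
    rw [Real.cosh_eq, Real.sinh_eq]
    nlinarith [hcvx]
  have h_mgf : ∫ x, Real.exp (l * F x) ∂Q ≤ Real.cosh l := by
    calc ∫ x, Real.exp (l * F x) ∂Q ≤ ∫ x, (Real.cosh l + F x * Real.sinh l) ∂Q :=
      integral_mono hexp ((integrable_const _).add (hFi_Q.mul_const _)) hpt
    _ = Real.cosh l + (∫ x, F x ∂Q) * Real.sinh l := by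
        rw [integral_add (integrable_const _) (hFi_Q.mul_const _), integral_const,
          integral_mul_const]
        simp
    _ = Real.cosh l := by rw [hzero]; ring
  have h_log : Real.log (∫ x, Real.exp (l * F x) ∂Q) ≤ l^2/2 := by
    have h1 : Real.log (∫ x, Real.exp (l * F x) ∂Q) ≤ Real.log (Real.exp (l^2/2)) :=
      Real.log_le_log (integral_exp_pos hexp) (h_mgf.trans (Real.cosh_le_exp_half_sq l))
    rwa [Real.log_exp] at h1
  rw [MeasureTheory.integral_const_mul] at h_eq
  rw [h_eq] at h_nn
  linarith

/-- **Change of measure, sub-Gaussian form.**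
If `Y'` has the same marginal as `Y`, is independent of `X`, the joint law of `(X,Y)` is
absolutely continuous w.r.t. that of `(X,Y')`, and `f : 𝒳 × 𝒴 → [-1,1]` is measurable with
`E[f(X,Y')] = 0`, then `|E[f(X,Y)]| ≤ sqrt (2 * I(X;Y))`. -/
theorem change_of_measure_subgaussian
    {Ω 𝒳 𝒴 : Type*} [MeasurableSpace Ω] [MeasurableSpace 𝒳] [MeasurableSpace 𝒴]
    (μ : Measure Ω) [IsProbabilityMeasure μ]
    (X : Ω → 𝒳) (Y Y' : Ω → 𝒴)
    (hX : Measurable X) (hY : Measurable Y) (hY' : Measurable Y')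
    (hlaw : μ.map Y' = μ.map Y)
    (hindep : IndepFun X Y' μ)
    (hac : (μ.map fun ω => (X ω, Y ω)) ≪ (μ.map fun ω => (X ω, Y' ω)))
    (f : 𝒳 → 𝒴 → ℝ) (hf : Measurable (Function.uncurry f))
    (hbound : ∀ x y, f x y ∈ Set.Icc (-1 : ℝ) 1)
    (hzero : ∫ ω, f (X ω) (Y' ω) ∂μ = 0) :
    ENNReal.ofReal |∫ ω, f (X ω) (Y ω) ∂μ| ≤ (2 * mutualInfo μ X Y) ^ (1/2 : ℝ) := by
  classical
  set P : Measure (𝒳 × 𝒴) := μ.map (fun ω => (X ω, Y ω)) with hP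
  set Q : Measure (𝒳 × 𝒴) := μ.map (fun ω => (X ω, Y' ω)) with hQ
  haveI : IsProbabilityMeasure P := Measure.isProbabilityMeasure_map (hX.prodMk hY).aemeasurable
  haveI : IsProbabilityMeasure Q := Measure.isProbabilityMeasure_map (hX.prodMk hY').aemeasurable
  have hQprod : Q = (μ.map X).prod (μ.map Y) := by
    rw [hQ, (indepFun_iff_map_prod_eq_prod_map_map hX.aemeasurable hY'.aemeasurable).mp hindep,
      hlaw]
  have hMI : mutualInfo μ X Y = klDiv P Q := by rw [mutualInfo, ← hQprod]
  set F : 𝒳 × 𝒴 → ℝ := Function.uncurry f with hFdef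
  have hFb : ∀ p, F p ∈ Set.Icc (-1:ℝ) 1 := fun p => hbound p.1 p.2
  have hIP : ∫ ω, f (X ω) (Y ω) ∂μ = ∫ p, F p ∂P := by
    rw [hP, integral_map (hX.prodMk hY).aemeasurable hf.aestronglyMeasurable]
    rfl
  have hIQ : ∫ p, F p ∂Q = 0 := by
    rw [hQ, integral_map (hX.prodMk hY').aemeasurable hf.aestronglyMeasurable]
    exact hzero
  rw [hMI, hIP]
  by_cases hc : P ≪ Q ∧ Integrable (llr P Q) P
  · obtain ⟨hac', h_int⟩ := hc
    rw [klDiv, if_pos ⟨hac', h_int⟩]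
    set KL := ∫ x, llr P Q x ∂P with hKL
    have hKLnn : 0 ≤ KL := aux_integral_llr_nonneg hac' h_int
    set t := ∫ p, F p ∂P with ht
    have key : ∀ l : ℝ, 0 ≤ l → l * |t| ≤ KL + l^2/2 := by
      intro l hl
      rcases abs_cases t with ⟨habs, _⟩ | ⟨habs, _⟩
      · rw [habs]; exact aux_dv hac' h_int hf hFb hIQ hl
      · rw [habs]
        have hnegb : ∀ p, -F p ∈ Set.Icc (-1:ℝ) 1 := fun p => by
          have h := hFb p
          exact ⟨by linarith [h.2], by linarith [h.1]⟩
        have hz' : ∫ p, -F p ∂Q = 0 := by rw [integral_neg, hIQ]; ring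
        have hdv := aux_dv (F := fun p => -F p) hac' h_int hf.neg hnegb hz' hl
        rw [integral_neg] at hdv
        rw [ht]
        linarith
    have hreal : |t| ≤ Real.sqrt (2 * KL) := by
      refine le_of_forall_pos_le_add fun ε hε => ?_
      have hsq : Real.sqrt (2*KL) ^ 2 = 2 * KL := Real.sq_sqrt (by linarith)
      have hsn : 0 ≤ Real.sqrt (2*KL) := Real.sqrt_nonneg _
      have hl0 : 0 < Real.sqrt (2*KL) + ε := by linarith
      have h1 := key _ hl0.le
      nlinarith
    calc ENNReal.ofReal |t| ≤ ENNReal.ofReal (Real.sqrt (2 * KL)) :=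
        ENNReal.ofReal_le_ofReal hreal
      _ = (2 * ENNReal.ofReal KL) ^ (1/2 : ℝ) := by
          rw [Real.sqrt_eq_rpow, ← ENNReal.ofReal_rpow_of_nonneg (by linarith) (by norm_num),
            ENNReal.ofReal_mul (by norm_num : (0:ℝ) ≤ 2)]
          norm_num
  · rw [klDiv, if_neg hc]
    have h2 : (2 : ℝ≥0∞) * ⊤ = ⊤ := by simp
    rw [h2, ENNReal.top_rpow_of_pos (by norm_num)]
    exact le_top
end

section
/- Change of measure (binary KL form): Let X and Y be random variables over spaces 𝒳 and 𝒴, and let Y′ be a random variable with the same marginal distribution as Y such that Y′ is independent of X. Assume the joint distribution of (X,Y) is absolutely continuous with respect to the joint distribution of (X,Y′). Let g: 𝒳×𝒴 → [0,1] be measurable. Then d( E_{X,Y}[g(X,Y)] ‖ E_{X,Y′}[g(X,Y′)] ) ≤ I(X;Y), where d(p‖q) denotes the binary KL divergence. -/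
open MeasureTheory ProbabilityTheory Real
open scoped ENNReal ProbabilityTheory
open scoped NNReal

open Classical in
/-- Binary KL divergence `d(p‖q) = p log(p/q) + (1-p) log((1-p)/(1-q))`, valued in `ℝ≥0∞`,
with the conventions `0 log 0 = 0` and `d(p‖q) = ∞` when `q ∈ {0,1}` but `p` is not. -/
noncomputable def binKL (p q : ℝ) : ℝ≥0∞ :=
  if (q = 0 ∧ p ≠ 0) ∨ (q = 1 ∧ p ≠ 1) then ⊤
  else ENNReal.ofReal (p * Real.log (p / q) + (1 - p) * Real.log ((1 - p) / (1 - q)))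

/-- Weighted Jensen's inequality for `x ↦ x * log x`. -/
lemma weighted_jensen {α : Type*} [MeasurableSpace α] (Q : Measure α) [IsProbabilityMeasure Q]
    (w f : α → ℝ) (hw : Measurable w) (hw0 : ∀ x, 0 ≤ w x) (hw1 : ∀ x, w x ≤ 1)
    (hf : Measurable f) (hf0 : ∀ x, 0 ≤ f x) (hfi : Integrable f Q)
    (hphi : Integrable (fun x => f x * Real.log (f x)) Q)
    (hm : 0 < ∫ x, w x ∂Q) :
    (∫ x, w x * f x ∂Q) * Real.log ((∫ x, w x * f x ∂Q) / (∫ x, w x ∂Q))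
      ≤ ∫ x, w x * (f x * Real.log (f x)) ∂Q := by
  set m := ∫ x, w x ∂Q with hmdef
  have hwi : Integrable w Q :=
    (integrable_const (1:ℝ)).mono' hw.aestronglyMeasurable
      (Filter.Eventually.of_forall fun x => by
        rw [Real.norm_eq_abs, abs_of_nonneg (hw0 x)]; exact hw1 x)
  set w' : α → ℝ≥0 := fun x => Real.toNNReal (w x) with hw'def
  have hw'meas : Measurable w' := hw.real_toNNReal
  set ν := Q.withDensity (fun x => (w' x : ℝ≥0∞)) with hν
  have hcoe : ∀ x, ((w' x : ℝ≥0) : ℝ) = w x := fun x => Real.coe_toNNReal _ (hw0 x)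
  have hsmul : ∀ (g : α → ℝ), ∫ x, g x ∂ν = ∫ x, w x * g x ∂Q := by
    intro g
    rw [hν, integral_withDensity_eq_integral_smul hw'meas]
    refine integral_congr_ae (Filter.Eventually.of_forall fun x => ?_)
    simp [NNReal.smul_def, hcoe x]
  have hνuniv : ν Set.univ = ENNReal.ofReal m := by
    rw [hν, withDensity_apply _ MeasurableSet.univ]
    rw [Measure.restrict_univ]
    rw [hmdef, MeasureTheory.ofReal_integral_eq_lintegral_ofReal hwi
      (Filter.Eventually.of_forall hw0)]
    congr 1
  have hνfin : IsFiniteMeasure ν := by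
    constructor
    rw [hνuniv]; exact ENNReal.ofReal_lt_top
  have hνne : NeZero ν := by
    constructor
    intro h
    rw [h] at hνuniv
    simp only [Measure.coe_zero, Pi.zero_apply] at hνuniv
    have := hνuniv.symm
    rw [ENNReal.ofReal_eq_zero] at this
    linarith
  have hfiν : Integrable f ν := by
    rw [hν, integrable_withDensity_iff (by exact hw'meas.coe_nnreal_ennreal)
      (Filter.Eventually.of_forall fun x => ENNReal.coe_lt_top)]
    have : Integrable (fun x => f x * w x) Q :=
      hfi.bdd_mul (c := 1) hw.aestronglyMeasurable
        (Filter.Eventually.of_forall fun x => by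
          rw [Real.norm_eq_abs, abs_of_nonneg (hw0 x)]; exact hw1 x) |>.congr
        (Filter.Eventually.of_forall fun x => by ring)
    exact this.congr (Filter.Eventually.of_forall fun x => by simp [hcoe x])
  have hphiν : Integrable (fun x => f x * Real.log (f x)) ν := by
    rw [hν, integrable_withDensity_iff (by exact hw'meas.coe_nnreal_ennreal)
      (Filter.Eventually.of_forall fun x => ENNReal.coe_lt_top)]
    have : Integrable (fun x => (f x * Real.log (f x)) * w x) Q :=
      hphi.bdd_mul (c := 1) hw.aestronglyMeasurable
        (Filter.Eventually.of_forall fun x => by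
          rw [Real.norm_eq_abs, abs_of_nonneg (hw0 x)]; exact hw1 x) |>.congr
        (Filter.Eventually.of_forall fun x => by ring)
    exact this.congr (Filter.Eventually.of_forall fun x => by simp [hcoe x])
  have hjensen := Real.convexOn_mul_log.map_average_le (μ := ν)
    Real.continuous_mul_log.continuousOn isClosed_Ici
    (Filter.Eventually.of_forall fun x => hf0 x) hfiν hphiν
  rw [average_eq, average_eq, measureReal_def, hνuniv, ENNReal.toReal_ofReal hm.le] at hjensen
  rw [hsmul f, hsmul (fun x => f x * Real.log (f x))] at hjensen
  set p := ∫ x, w x * f x ∂Q with hpdef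
  set I := ∫ x, w x * (f x * Real.log (f x)) ∂Q with hIdef
  simp only [smul_eq_mul] at hjensen
  -- hjensen : (m⁻¹ * p) * log (m⁻¹ * p) ≤ m⁻¹ * I
  have hmul := mul_le_mul_of_nonneg_left hjensen hm.le
  have hm0 : m ≠ 0 := hm.ne'
  calc p * Real.log (p / m) = m * ((m⁻¹ * p) * Real.log (m⁻¹ * p)) := by
        rw [div_eq_inv_mul]; field_simp
    _ ≤ m * (m⁻¹ * I) := hmul
    _ = I := by rw [← mul_assoc, mul_inv_cancel₀ hm0, one_mul]

lemma binKL_le_klDiv {α : Type*} [MeasurableSpace α] (P Q : Measure α)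
    [IsProbabilityMeasure P] [IsProbabilityMeasure Q] (hPQ : P ≪ Q)
    (g : α → ℝ) (hg : Measurable g) (hb : ∀ x, g x ∈ Set.Icc (0:ℝ) 1) :
    binKL (∫ x, g x ∂P) (∫ x, g x ∂Q) ≤ klDiv P Q := by
  classical
  by_cases hint : Integrable (llr P Q) P
  swap
  · rw [klDiv, if_neg (fun h => hint h.2)]; exact le_top
  rw [klDiv, if_pos ⟨hPQ, hint⟩]
  set f : α → ℝ := fun x => (P.rnDeriv Q x).toReal with hfdef
  have hfmeas : Measurable f := (Measure.measurable_rnDeriv P Q).ennreal_toReal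
  have hf0 : ∀ x, 0 ≤ f x := fun x => ENNReal.toReal_nonneg
  have hfi : Integrable f Q := Measure.integrable_toReal_rnDeriv
  have hQint : Integrable (fun x => f x * Real.log (f x)) Q := by
    have := (integrable_rnDeriv_smul_iff (f := llr P Q) hPQ).mpr hint
    exact this.congr (Filter.Eventually.of_forall fun x => by simp [llr, smul_eq_mul, hfdef])
  have hKL : ∫ x, llr P Q x ∂P = ∫ x, f x * Real.log (f x) ∂Q := by
    rw [← integral_rnDeriv_smul (f := llr P Q) hPQ]
    refine integral_congr_ae (Filter.Eventually.of_forall fun x => ?_)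
    simp [llr, smul_eq_mul, hfdef]
  have hb0 : ∀ x, 0 ≤ g x := fun x => (hb x).1
  have hb1 : ∀ x, g x ≤ 1 := fun x => (hb x).2
  have hbnorm : ∀ x, ‖g x‖ ≤ 1 := fun x => by
    rw [Real.norm_eq_abs, abs_of_nonneg (hb0 x)]; exact hb1 x
  have hgiQ : Integrable g Q :=
    (integrable_const (1:ℝ)).mono' hg.aestronglyMeasurable
      (Filter.Eventually.of_forall hbnorm)
  have hgiP : Integrable g P :=
    (integrable_const (1:ℝ)).mono' hg.aestronglyMeasurable
      (Filter.Eventually.of_forall hbnorm)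
  set p := ∫ x, g x ∂P with hpdef
  set q := ∫ x, g x ∂Q with hqdef
  have hq0 : 0 ≤ q := integral_nonneg hb0
  have hq1 : q ≤ 1 := by
    calc q ≤ ∫ _, (1:ℝ) ∂Q := integral_mono hgiQ (integrable_const 1) hb1
      _ = 1 := by simp
  have hp0 : 0 ≤ p := integral_nonneg hb0
  have hp1 : p ≤ 1 := by
    calc p ≤ ∫ _, (1:ℝ) ∂P := integral_mono hgiP (integrable_const 1) hb1
      _ = 1 := by simp
  -- link p to Q-integral
  have hpQ : p = ∫ x, g x * f x ∂Q := by
    rw [hpdef, ← integral_rnDeriv_smul (f := g) hPQ]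
    exact integral_congr_ae (Filter.Eventually.of_forall fun x => (mul_comm _ _))
  have hfint1 : ∫ x, f x ∂Q = 1 := by
    rw [hfdef, Measure.integral_toReal_rnDeriv hPQ]; simp
  by_cases hq : q = 0
  · -- then p = 0, binKL 0 0 = 0
    have hgQ0 : g =ᵐ[Q] 0 := (integral_eq_zero_iff_of_nonneg hb0 hgiQ).mp hq
    have hgP0 : g =ᵐ[P] 0 := hPQ.ae_le hgQ0
    have hp : p = 0 := by rw [hpdef, integral_congr_ae hgP0]; simp
    rw [hp, hq, binKL, if_neg (by simp)]
    simp
  by_cases hq' : q = 1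
  · have h1g : (fun x => 1 - g x) =ᵐ[Q] 0 := by
      refine (integral_eq_zero_iff_of_nonneg (fun x => by simp only [Pi.zero_apply]; linarith [hb1 x]) ?_).mp ?_
      · exact (integrable_const 1).sub hgiQ
      · rw [integral_sub (integrable_const 1) hgiQ]; simp [← hqdef, hq']
    have h1gP : (fun x => 1 - g x) =ᵐ[P] 0 := hPQ.ae_le h1g
    have hp : p = 1 := by
      have : g =ᵐ[P] fun _ => (1:ℝ) := h1gP.mono fun x hx => by
        simp only [Pi.zero_apply] at hx
        show g x = (1:ℝ)
        linarith
      rw [hpdef, integral_congr_ae this]; simp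
    rw [hp, hq', binKL, if_neg (by simp)]
    simp
  -- main case: 0 < q < 1
  have hqpos : 0 < q := lt_of_le_of_ne hq0 (Ne.symm hq)
  have hqlt : q < 1 := lt_of_le_of_ne hq1 hq'
  have j1 := weighted_jensen Q g f hg hb0 hb1 hfmeas hf0 hfi hQint (hqdef ▸ hqpos)
  have j2 := weighted_jensen Q (fun x => 1 - g x) f (measurable_const.sub hg)
    (fun x => by show (0:ℝ) ≤ 1 - g x; linarith [hb1 x]) (fun x => by show (1:ℝ) - g x ≤ 1; linarith [hb0 x]) hfmeas hf0 hfi hQint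
    (by
      rw [integral_sub (integrable_const 1) hgiQ]
      simp only [integral_const, measureReal_def, measure_univ, ENNReal.toReal_one, smul_eq_mul, mul_one]
      rw [← hqdef]; linarith)
  -- rewrite the integrals in j1, j2
  have hw1 : ∫ x, (1:ℝ) - g x ∂Q = 1 - q := by
    rw [integral_sub (integrable_const 1) hgiQ]; simp [← hqdef]
  have hgfQ : Integrable (fun x => g x * f x) Q :=
    (hfi.bdd_mul (c := 1) hg.aestronglyMeasurable
      (Filter.Eventually.of_forall hbnorm)).congr
      (Filter.Eventually.of_forall fun x => rfl)
  have hw1f : ∫ x, ((1:ℝ) - g x) * f x ∂Q = 1 - p := by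
    have : (fun x => ((1:ℝ) - g x) * f x) = fun x => f x - g x * f x := by
      ext x; ring
    rw [this, integral_sub hfi hgfQ, hfint1, ← hpQ]
  have hgfl : Integrable (fun x => g x * (f x * Real.log (f x))) Q :=
    (hQint.bdd_mul (c := 1) hg.aestronglyMeasurable
      (Filter.Eventually.of_forall hbnorm)).congr
      (Filter.Eventually.of_forall fun x => rfl)
  have hsum : ∫ x, g x * (f x * Real.log (f x)) ∂Q
      + ∫ x, ((1:ℝ) - g x) * (f x * Real.log (f x)) ∂Q = ∫ x, f x * Real.log (f x) ∂Q := by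
    rw [← integral_add hgfl]
    · exact integral_congr_ae (Filter.Eventually.of_forall fun x => by ring)
    · have : (fun x => ((1:ℝ) - g x) * (f x * Real.log (f x)))
          = fun x => f x * Real.log (f x) - g x * (f x * Real.log (f x)) := by ext x; ring
      rw [this]; exact hQint.sub hgfl
  rw [← hpQ] at j1
  rw [hw1, hw1f] at j2
  rw [← hqdef] at j1
  have hfinal : p * Real.log (p / q) + (1 - p) * Real.log ((1 - p) / (1 - q))
      ≤ ∫ x, llr P Q x ∂P := by
    rw [hKL, ← hsum]
    exact add_le_add j1 j2
  rw [binKL, if_neg (by push_neg; exact ⟨fun h => absurd h hq, fun h => absurd h hq'⟩)]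
  exact ENNReal.ofReal_le_ofReal hfinal

/-- **Change of measure, binary KL form.**
If `Y'` has the same marginal as `Y`, is independent of `X`, the joint law of `(X,Y)` is
absolutely continuous w.r.t. that of `(X,Y')`, and `g : 𝒳 × 𝒴 → [0,1]` is measurable, then
`d( E[g(X,Y)] ‖ E[g(X,Y')] ) ≤ I(X;Y)`. -/
theorem change_of_measure_binary_kl
    {Ω 𝒳 𝒴 : Type*} [MeasurableSpace Ω] [MeasurableSpace 𝒳] [MeasurableSpace 𝒴]
    (μ : Measure Ω) [IsProbabilityMeasure μ]
    (X : Ω → 𝒳) (Y Y' : Ω → 𝒴)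
    (hX : Measurable X) (hY : Measurable Y) (hY' : Measurable Y')
    (hlaw : μ.map Y' = μ.map Y)
    (hindep : IndepFun X Y' μ)
    (hac : (μ.map fun ω => (X ω, Y ω)) ≪ (μ.map fun ω => (X ω, Y' ω)))
    (g : 𝒳 → 𝒴 → ℝ) (hg : Measurable (Function.uncurry g))
    (hbound : ∀ x y, g x y ∈ Set.Icc (0 : ℝ) 1) :
    binKL (∫ ω, g (X ω) (Y ω) ∂μ) (∫ ω, g (X ω) (Y' ω) ∂μ) ≤ mutualInfo μ X Y := by
  have hXY : Measurable fun ω => (X ω, Y ω) := hX.prodMk hY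
  have hXY' : Measurable fun ω => (X ω, Y' ω) := hX.prodMk hY'
  have hQeq : (μ.map fun ω => (X ω, Y' ω)) = (μ.map X).prod (μ.map Y) := by
    rw [← hlaw]
    exact (indepFun_iff_map_prod_eq_prod_map_map hX.aemeasurable hY'.aemeasurable).mp hindep
  haveI hPprob : IsProbabilityMeasure (μ.map fun ω => (X ω, Y ω)) :=
    Measure.isProbabilityMeasure_map hXY.aemeasurable
  haveI hQprob : IsProbabilityMeasure (μ.map fun ω => (X ω, Y' ω)) :=
    Measure.isProbabilityMeasure_map hXY'.aemeasurable
  have hiP : ∫ ω, g (X ω) (Y ω) ∂μ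
      = ∫ z, Function.uncurry g z ∂(μ.map fun ω => (X ω, Y ω)) := by
    rw [integral_map hXY.aemeasurable hg.aestronglyMeasurable]
    rfl
  have hiQ : ∫ ω, g (X ω) (Y' ω) ∂μ
      = ∫ z, Function.uncurry g z ∂(μ.map fun ω => (X ω, Y' ω)) := by
    rw [integral_map hXY'.aemeasurable hg.aestronglyMeasurable]
    rfl
  rw [mutualInfo, ← hQeq, hiP, hiQ]
  exact binKL_le_klDiv _ _ hac (Function.uncurry g) hg (fun z => hbound z.1 z.2)
end

section
/- One-step square-root bound (Theorem 2): In the meta-learning CMI setup, |L̄_pop − L̂_train| ≤ (1/(n·n̂))·Σ_{i=1}^{n̂} Σ_{j=1}^{n} E_{Z̃}[ sqrt( 2·I^{Z̃}( λ^{(i)}_j ; Ŝ_i, S^{(i)}_j ) ) ], where S^{(i)}_j = (S^{(i,0)}_j, S^{(i,1)}_j). -/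
open MeasureTheory ProbabilityTheory Real
open scoped ENNReal ProbabilityTheory

/-- Conditional mutual information `I(X;Y|V)`, expressed as the KL divergence between the
joint law of `(V,(X,Y))` and the measure in which `X` and `Y` are conditionally independent
given `V` (with the same conditional marginals). -/
noncomputable def condMutualInfo {Ω α β γ : Type*} [MeasurableSpace Ω]
    [MeasurableSpace α] [StandardBorelSpace α] [Nonempty α]
    [MeasurableSpace β] [StandardBorelSpace β] [Nonempty β]
    [MeasurableSpace γ]
    (μ : Measure Ω) [IsFiniteMeasure μ] (X : Ω → α) (Y : Ω → β) (V : Ω → γ) : ℝ≥0∞ :=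
  klDiv (μ.map fun ω => (V ω, (X ω, Y ω)))
    ((μ.map V) ⊗ₘ ((condDistrib X V μ).prod (condDistrib Y V μ)))

/-- Disintegrated mutual information `I^V(X;Y)` evaluated at the outcome `ω`:
the KL divergence between the conditional joint law of `(X,Y)` given `V` and the product of
the conditional marginals, evaluated at `V ω`. -/
noncomputable def dMutualInfo {Ω α β γ : Type*} [MeasurableSpace Ω]
    [MeasurableSpace α] [StandardBorelSpace α] [Nonempty α]
    [MeasurableSpace β] [StandardBorelSpace β] [Nonempty β]
    [MeasurableSpace γ]
    (μ : Measure Ω) [IsFiniteMeasure μ] (X : Ω → α) (Y : Ω → β) (V : Ω → γ) (ω : Ω) : ℝ≥0∞ :=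
  klDiv ((condDistrib (fun ω' => (X ω', Y ω')) V μ) (V ω))
    (((condDistrib X V μ) (V ω)).prod ((condDistrib Y V μ) (V ω)))

/-- **The meta-learning CMI setup.**
There are `nt` task pairs and `n` sample pairs per task.  Tasks are drawn i.i.d. from the
task distribution `τdistro`; the meta-supersample `Zt` consists of samples drawn independently
from the in-task distributions `D τ`.  The membership variables `Sh` (meta membership) and
`S` (in-task membership) have i.i.d. Bernoulli(1/2) entries, independent of the data and of the
algorithmic randomness `Rhat, R`.  The meta learner `A` and base learner `B` produce losses
via the `[0,1]`-valued loss function `loss`. -/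
structure MetaSetup (Ω 𝒯 𝒵 𝒰 𝒲 Rh Rb : Type*)
    [MeasurableSpace Ω] [MeasurableSpace 𝒯] [MeasurableSpace 𝒵] [MeasurableSpace 𝒰]
    [MeasurableSpace 𝒲] [MeasurableSpace Rh] [MeasurableSpace Rb]
    (nt n : ℕ) where
  μ : Measure Ω
  prob : IsProbabilityMeasure μ
  τdistro : Measure 𝒯
  probτ : IsProbabilityMeasure τdistro
  D : Kernel 𝒯 𝒵
  markovD : IsMarkovKernel D
  ρh : Measure Rh
  probρh : IsProbabilityMeasure ρh
  ρ : Measure Rb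
  probρ : IsProbabilityMeasure ρ
  Zt : Ω → Fin nt → Fin 2 → Fin n → Fin 2 → 𝒵
  Sh : Ω → Fin nt → Fin 2
  S : Ω → Fin nt → Fin 2 → Fin n → Fin 2
  Rhat : Ω → Rh
  R : Ω → Fin nt → Rb
  A : (Fin nt → Fin n → 𝒵) → Rh → 𝒰
  B : (Fin n → 𝒵) → Rb → 𝒰 → 𝒲
  loss : 𝒲 → 𝒵 → ℝ
  loss_mem : ∀ w z, loss w z ∈ Set.Icc (0 : ℝ) 1
  meas_Zt : Measurable Zt
  meas_Sh : Measurable Sh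
  meas_S : Measurable S
  meas_Rhat : Measurable Rhat
  meas_R : Measurable R
  meas_A : Measurable fun p : (Fin nt → Fin n → 𝒵) × Rh => A p.1 p.2
  meas_B : Measurable fun p : (Fin n → 𝒵) × Rb × 𝒰 => B p.1 p.2.1 p.2.2
  meas_loss : Measurable fun p : 𝒲 × 𝒵 => loss p.1 p.2
  law_Zt : μ.map Zt
    = Measure.pi fun _i : Fin nt => Measure.pi fun _k : Fin 2 =>
        τdistro.bind fun t => Measure.pi fun _j : Fin n => Measure.pi fun _l : Fin 2 => D t
  law_S : μ.map (fun ω => (Sh ω, S ω))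
    = ((PMF.uniformOfFintype (Fin nt → Fin 2)).toMeasure).prod
        ((PMF.uniformOfFintype (Fin nt → Fin 2 → Fin n → Fin 2)).toMeasure)
  law_R : μ.map (fun ω => (Rhat ω, R ω)) = ρh.prod (Measure.pi fun _ : Fin nt => ρ)
  indep₁ : IndepFun Zt (fun ω => ((Sh ω, S ω), (Rhat ω, R ω))) μ
  indep₂ : IndepFun (fun ω => (Sh ω, S ω)) (fun ω => (Rhat ω, R ω)) μ

namespace MetaSetup

variable {Ω 𝒯 𝒵 𝒰 𝒲 Rh Rb : Type*}
    [MeasurableSpace Ω] [MeasurableSpace 𝒯] [MeasurableSpace 𝒵] [MeasurableSpace 𝒰]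
    [MeasurableSpace 𝒲] [MeasurableSpace Rh] [MeasurableSpace Rb]
    {nt n : ℕ}

instance (M : MetaSetup Ω 𝒯 𝒵 𝒰 𝒲 Rh Rb nt n) : IsProbabilityMeasure M.μ := M.prob

variable (M : MetaSetup Ω 𝒯 𝒵 𝒰 𝒲 Rh Rb nt n)

/-- Output `U` of the meta learner. -/
noncomputable def U (ω : Ω) : 𝒰 :=
  M.A (fun i j => M.Zt ω i (M.Sh ω i) j (M.S ω i (M.Sh ω i) j)) (M.Rhat ω)

/-- Output `W^{(i,k)}` of the base learner for task `(i,k)`. -/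
noncomputable def W (i : Fin nt) (k : Fin 2) (ω : Ω) : 𝒲 :=
  M.B (fun j => M.Zt ω i k j (M.S ω i k j)) (M.R ω i) (M.U ω)

/-- The loss `λ^{(i,k)}_{j,l}` incurred on sample `(j,l)` of task `(i,k)`. -/
noncomputable def lam (i : Fin nt) (k : Fin 2) (j : Fin n) (l : Fin 2) (ω : Ω) : ℝ :=
  M.loss (M.W i k ω) (M.Zt ω i k j l)

/-- The average meta-population loss `L̄_pop`. -/
noncomputable def Lpop : ℝ :=
  (n * nt : ℝ)⁻¹ * ∑ i : Fin nt, ∑ j : Fin n,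
    ∫ ω, M.lam i (1 - M.Sh ω i) j (1 - M.S ω i (1 - M.Sh ω i) j) ω ∂M.μ

/-- The average meta-training loss `L̂_train`. -/
noncomputable def Ltrain : ℝ :=
  (n * nt : ℝ)⁻¹ * ∑ i : Fin nt, ∑ j : Fin n,
    ∫ ω, M.lam i (M.Sh ω i) j (M.S ω i (M.Sh ω i) j) ω ∂M.μ

/-- The average auxiliary test loss `L̄_test` (test data of observed tasks). -/
noncomputable def Ltest : ℝ :=
  (n * nt : ℝ)⁻¹ * ∑ i : Fin nt, ∑ j : Fin n,
    ∫ ω, M.lam i (M.Sh ω i) j (1 - M.S ω i (M.Sh ω i) j) ω ∂M.μ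

/-- The average auxiliary training loss `L̂_aux` (training data of unobserved tasks). -/
noncomputable def Laux : ℝ :=
  (n * nt : ℝ)⁻¹ * ∑ i : Fin nt, ∑ j : Fin n,
    ∫ ω, M.lam i (1 - M.Sh ω i) j (M.S ω i (1 - M.Sh ω i) j) ω ∂M.μ

end MetaSetup

section AuxLemmas

/-! ### Auxiliary lemmas -/

lemma aux_F_mono : MonotoneOn (fun x : ℝ => (x + 1) * Real.log x - 2 * (x - 1)) (Set.Ioi 0) := by
  have hd : ∀ x ∈ Set.Ioi (0:ℝ), HasDerivAt (fun x : ℝ => (x + 1) * Real.log x - 2 * (x - 1))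
      (Real.log x + (x + 1) / x - 2) x := by
    intro x hx
    have hx0 : x ≠ 0 := ne_of_gt hx
    have h1 : HasDerivAt (fun x : ℝ => (x + 1) * Real.log x)
        (1 * Real.log x + (x + 1) * x⁻¹) x :=
      (((hasDerivAt_id x).add_const 1)).mul (Real.hasDerivAt_log hx0)
    have h2 : HasDerivAt (fun x : ℝ => 2 * (x - 1)) 2 x := by
      simpa using ((hasDerivAt_id x).sub_const 1).const_mul 2
    refine (h1.sub h2).congr_deriv ?_
    ring
  refine monotoneOn_of_deriv_nonneg (convex_Ioi 0) ?_ ?_ ?_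
  · exact (ContinuousOn.mul (by fun_prop) (Real.continuousOn_log.mono (by
      intro x hx; exact ne_of_gt hx))).sub (by fun_prop)
  · intro x hx
    rw [interior_Ioi] at hx
    exact (hd x hx).differentiableAt.differentiableWithinAt
  · intro x hx
    rw [interior_Ioi] at hx
    rw [(hd x hx).deriv]
    have hlog : 1 - x⁻¹ ≤ Real.log x := Real.one_sub_inv_le_log_of_pos hx
    have hx0 : (0:ℝ) < x := hx
    have : (x + 1) / x = 1 + x⁻¹ := by field_simp
    rw [this]
    linarith

/-- Key pointwise inequality for Pinsker: `3(x-1)² ≤ (2x+4)(x log x - x + 1)` for `x ≥ 0`. -/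
lemma pinsker_pointwise {x : ℝ} (hx : 0 ≤ x) :
    3 * (x - 1) ^ 2 ≤ (2 * x + 4) * (x * Real.log x - x + 1) := by
  rcases eq_or_lt_of_le hx with rfl | hx
  · simp [Real.log_zero]; norm_num
  set ψ : ℝ → ℝ := fun x => (2 * x + 4) * (x * Real.log x - x + 1) - 3 * (x - 1) ^ 2 with hψ
  have hd : ∀ y ∈ Set.Ioi (0:ℝ), HasDerivAt ψ
      (4 * ((y + 1) * Real.log y - 2 * (y - 1))) y := by
    intro y hy
    have hy0 : y ≠ 0 := ne_of_gt hy
    have h1 : HasDerivAt (fun y : ℝ => y * Real.log y) (1 * Real.log y + y * y⁻¹) y :=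
      (hasDerivAt_id y).mul (Real.hasDerivAt_log hy0)
    have h1' : HasDerivAt (fun y : ℝ => y * Real.log y - y + 1) (Real.log y) y := by
      have := (h1.sub (hasDerivAt_id y)).add_const 1
      refine this.congr_deriv ?_
      rw [mul_inv_cancel₀ hy0]; ring
    have h2 : HasDerivAt (fun y : ℝ => 2 * y + 4) 2 y := by
      simpa using ((hasDerivAt_id y).const_mul 2).add_const 4
    have h3 : HasDerivAt (fun y : ℝ => 3 * (y - 1) ^ 2) (3 * (2 * (y - 1))) y := by
      have := (((hasDerivAt_id y).sub_const 1).pow 2).const_mul 3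
      simpa using this
    have := (h2.mul h1').sub h3
    refine this.congr_deriv ?_
    ring
  have hψ1 : ψ 1 = 0 := by simp [hψ]
  have hcont : ContinuousOn ψ (Set.Ioi 0) := by
    apply ContinuousOn.sub
    · apply ContinuousOn.mul (by fun_prop)
      exact ((continuousOn_id.mul (Real.continuousOn_log.mono (fun x hx => ne_of_gt hx))).sub
        continuousOn_id).add continuousOn_const
    · fun_prop
  rcases le_total x 1 with hx1 | hx1
  · have hanti : AntitoneOn ψ (Set.Ioc 0 1) := by
      refine antitoneOn_of_deriv_nonpos (convex_Ioc 0 1) (hcont.mono (by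
        intro y hy; exact hy.1)) ?_ ?_
      · intro y hy
        rw [interior_Ioc] at hy
        exact (hd y hy.1).differentiableAt.differentiableWithinAt
      · intro y hy
        rw [interior_Ioc] at hy
        rw [(hd y hy.1).deriv]
        have := aux_F_mono (Set.mem_Ioi.2 hy.1) (Set.mem_Ioi.2 one_pos) (le_of_lt hy.2)
        simp only at this
        simp only [Real.log_one] at this
        nlinarith
    have := hanti (Set.mem_Ioc.2 ⟨hx, hx1⟩) (Set.mem_Ioc.2 ⟨one_pos, le_rfl⟩) hx1
    rw [hψ1] at this
    simpa [hψ] using this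
  · have hmono : MonotoneOn ψ (Set.Ici 1) := by
      refine monotoneOn_of_deriv_nonneg (convex_Ici 1) (hcont.mono (by
        intro y hy; simp only [Set.mem_Ici] at hy
        exact Set.mem_Ioi.2 (lt_of_lt_of_le one_pos hy))) ?_ ?_
      · intro y hy
        rw [interior_Ici] at hy
        exact (hd y (Set.mem_Ioi.2 (lt_trans one_pos hy))).differentiableAt.differentiableWithinAt
      · intro y hy
        rw [interior_Ici] at hy
        rw [(hd y (Set.mem_Ioi.2 (lt_trans one_pos hy))).deriv]
        have := aux_F_mono (Set.mem_Ioi.2 one_pos) (Set.mem_Ioi.2 (lt_trans one_pos hy))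
          (le_of_lt hy)
        simp only [Real.log_one] at this
        nlinarith
    have := hmono (Set.mem_Ici.2 le_rfl) (Set.mem_Ici.2 hx1) hx1
    rw [hψ1] at this
    simpa [hψ] using this

lemma isConjExponent_two_two : Real.HolderConjugate 2 2 := Real.HolderConjugate.two_two

lemma ofReal_rpow_two (a : ℝ) (ha : 0 ≤ a) :
    (ENNReal.ofReal a) ^ (2:ℝ) = ENNReal.ofReal (a ^ 2) := by
  rw [ENNReal.ofReal_rpow_of_nonneg ha (by norm_num)]
  norm_num

/-- Pinsker-type inequality (weak constant): for `|f| ≤ 1`,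
`|E_P f - E_Q f| ≤ sqrt(2 KL(P‖Q))`. -/
lemma pinsker_bound {α : Type*} [MeasurableSpace α] (P Q : Measure α)
    [IsProbabilityMeasure P] [IsProbabilityMeasure Q] {f : α → ℝ}
    (hf : Measurable f) (hb : ∀ x, |f x| ≤ 1) :
    ENNReal.ofReal |∫ x, f x ∂P - ∫ x, f x ∂Q| ≤ (2 * klDiv P Q) ^ (1/2 : ℝ) := by
  classical
  rw [klDiv]
  split_ifs with hc
  swap
  · simp [ENNReal.mul_top, ENNReal.top_rpow_of_pos (by norm_num : (0:ℝ) < 1/2)]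
  obtain ⟨hac, hint⟩ := hc
  set h : α → ℝ := fun x => (P.rnDeriv Q x).toReal with hh
  have hmeas_h : Measurable h := (Measure.measurable_rnDeriv P Q).ennreal_toReal
  have hh_nonneg : ∀ x, 0 ≤ h x := fun x => ENNReal.toReal_nonneg
  have hint_h : Integrable h Q := Measure.integrable_toReal_rnDeriv
  have hint_hQ : ∫ x, h x ∂Q = 1 := by
    rw [hh, Measure.integral_toReal_rnDeriv hac]; simp
  have hKL : ∫ x, llr P Q x ∂P = ∫ x, h x * Real.log (h x) ∂Q := by
    rw [← integral_rnDeriv_smul hac (f := llr P Q)]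
    simp only [smul_eq_mul, llr, hh]
  have hint_hlogh : Integrable (fun x => h x * Real.log (h x)) Q := by
    have := (integrable_rnDeriv_smul_iff hac (f := llr P Q)).mpr hint
    simpa [llr, smul_eq_mul] using this
  set φh : α → ℝ := fun x => h x * Real.log (h x) - h x + 1 with hφh
  have hint_sub : Integrable (fun x => h x * Real.log (h x) - h x) Q := hint_hlogh.sub hint_h
  have hint_φh : Integrable φh Q := hint_sub.add (integrable_const 1)
  have hφh_nonneg : ∀ x, 0 ≤ φh x := by
    intro x
    have h1 := pinsker_pointwise (hh_nonneg x)
    have h2 : (0:ℝ) < 2 * h x + 4 := by nlinarith [hh_nonneg x]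
    show (0:ℝ) ≤ h x * Real.log (h x) - h x + 1
    nlinarith [sq_nonneg (h x - 1)]
  have hIKL : ∫ x, φh x ∂Q = ∫ x, llr P Q x ∂P := by
    have e1 : ∫ x, φh x ∂Q
        = (∫ x, (h x * Real.log (h x) - h x) ∂Q) + ∫ _x, (1:ℝ) ∂Q :=
      integral_add hint_sub (integrable_const 1)
    have e2 : ∫ x, (h x * Real.log (h x) - h x) ∂Q
        = (∫ x, h x * Real.log (h x) ∂Q) - ∫ x, h x ∂Q := integral_sub hint_hlogh hint_h
    rw [e1, e2, hint_hQ, hKL]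
    simp
  have hI_nonneg : 0 ≤ ∫ x, φh x ∂Q := integral_nonneg hφh_nonneg
  have hbound : ∀ x, ‖f x‖ ≤ 1 := fun x => by simpa using hb x
  have hint_fP : Integrable f P :=
    ⟨hf.aestronglyMeasurable, HasFiniteIntegral.of_bounded (C := 1)
      (Filter.Eventually.of_forall hbound)⟩
  have hint_fQ : Integrable f Q :=
    ⟨hf.aestronglyMeasurable, HasFiniteIntegral.of_bounded (C := 1)
      (Filter.Eventually.of_forall hbound)⟩
  have hPf : ∫ x, f x ∂P = ∫ x, h x * f x ∂Q := by
    rw [← integral_rnDeriv_smul hac (f := f)]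
    simp only [smul_eq_mul, hh]
  have hint_hf : Integrable (fun x => h x * f x) Q := by
    have := (integrable_rnDeriv_smul_iff hac (f := f)).mpr hint_fP
    simpa [smul_eq_mul] using this
  have hint_habs : Integrable (fun x => |h x - 1|) Q :=
    ((hint_h.sub (integrable_const 1)).congr (Filter.Eventually.of_forall fun x => rfl)).abs
  have hstepA : |∫ x, f x ∂P - ∫ x, f x ∂Q| ≤ ∫ x, |h x - 1| ∂Q := by
    rw [hPf, ← integral_sub hint_hf hint_fQ, ← Real.norm_eq_abs]
    refine (norm_integral_le_integral_norm _).trans ?_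
    refine integral_mono_of_nonneg (Filter.Eventually.of_forall fun x => norm_nonneg _)
      hint_habs (Filter.Eventually.of_forall fun x => ?_)
    show ‖h x * f x - f x‖ ≤ |h x - 1|
    have e : h x * f x - f x = (h x - 1) * f x := by ring
    rw [Real.norm_eq_abs, e, abs_mul]
    calc |h x - 1| * |f x| ≤ |h x - 1| * 1 :=
          mul_le_mul_of_nonneg_left (hb x) (abs_nonneg _)
      _ = |h x - 1| := mul_one _
  set I : ℝ := ∫ x, φh x ∂Q with hI
  have hstepB : ENNReal.ofReal (∫ x, |h x - 1| ∂Q) ≤ (ENNReal.ofReal (2 * I)) ^ (1/2 : ℝ) := by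
    have h1 : ENNReal.ofReal (∫ x, |h x - 1| ∂Q) = ∫⁻ x, ENNReal.ofReal |h x - 1| ∂Q :=
      ofReal_integral_eq_lintegral_ofReal hint_habs
        (Filter.Eventually.of_forall fun x => abs_nonneg _)
    rw [h1]
    set u : α → ℝ≥0∞ := fun x => ENNReal.ofReal (|h x - 1| / Real.sqrt (2 * h x + 4)) with hu
    set v : α → ℝ≥0∞ := fun x => ENNReal.ofReal (Real.sqrt (2 * h x + 4)) with hv
    have hpos : ∀ x, (0:ℝ) < 2 * h x + 4 := fun x => by nlinarith [hh_nonneg x]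
    have hsq_pos : ∀ x, 0 < Real.sqrt (2 * h x + 4) := fun x => Real.sqrt_pos.2 (hpos x)
    have huv : ∀ x, ENNReal.ofReal |h x - 1| = u x * v x := by
      intro x
      rw [hu, hv, ← ENNReal.ofReal_mul (by positivity)]
      congr 1
      field_simp
      rw [mul_div_cancel_right₀ _ (by rw [mul_comm]; exact (hsq_pos x).ne')]
    have hmu : AEMeasurable u Q :=
      (((hmeas_h.sub measurable_const).abs).div
        ((hmeas_h.const_mul 2 |>.add_const 4).sqrt)).ennreal_ofReal.aemeasurable
    have hmv : AEMeasurable v Q :=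
      ((hmeas_h.const_mul 2 |>.add_const 4).sqrt).ennreal_ofReal.aemeasurable
    have hu2 : ∀ x, u x ^ (2:ℝ) = ENNReal.ofReal ((h x - 1)^2 / (2 * h x + 4)) := by
      intro x
      show (ENNReal.ofReal (|h x - 1| / Real.sqrt (2 * h x + 4))) ^ (2:ℝ)
        = ENNReal.ofReal ((h x - 1) ^ 2 / (2 * h x + 4))
      rw [ofReal_rpow_two _ (by positivity)]
      congr 1
      rw [div_pow, Real.sq_sqrt (hpos x).le, sq_abs]
    have hv2 : ∀ x, v x ^ (2:ℝ) = ENNReal.ofReal (2 * h x + 4) := by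
      intro x
      show (ENNReal.ofReal (Real.sqrt (2 * h x + 4))) ^ (2:ℝ) = ENNReal.ofReal (2 * h x + 4)
      rw [ofReal_rpow_two _ (Real.sqrt_nonneg _), Real.sq_sqrt (hpos x).le]
    have hint_2h4 : Integrable (fun x => 2 * h x + 4) Q :=
      (hint_h.const_mul 2).add (integrable_const 4)
    have hv2int : ∫⁻ x, v x ^ (2:ℝ) ∂Q = ENNReal.ofReal 6 := by
      rw [lintegral_congr hv2,
        ← ofReal_integral_eq_lintegral_ofReal hint_2h4
          (Filter.Eventually.of_forall fun x => (hpos x).le)]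
      congr 1
      rw [integral_add (hint_h.const_mul 2) (integrable_const 4), integral_const_mul, hint_hQ]
      simp
      norm_num
    have hu2int : ∫⁻ x, u x ^ (2:ℝ) ∂Q ≤ ENNReal.ofReal (I / 3) := by
      have hpt : ∀ x, u x ^ (2:ℝ) ≤ ENNReal.ofReal (φh x / 3) := by
        intro x
        rw [hu2]
        apply ENNReal.ofReal_le_ofReal
        rw [div_le_div_iff₀ (hpos x) (by norm_num)]
        have h1 := pinsker_pointwise (hh_nonneg x)
        show (h x - 1)^2 * 3 ≤ (h x * Real.log (h x) - h x + 1) * (2 * h x + 4)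
        nlinarith
      calc ∫⁻ x, u x ^ (2:ℝ) ∂Q ≤ ∫⁻ x, ENNReal.ofReal (φh x / 3) ∂Q := lintegral_mono hpt
        _ = ENNReal.ofReal (∫ x, φh x / 3 ∂Q) :=
            (ofReal_integral_eq_lintegral_ofReal (hint_φh.div_const 3)
              (Filter.Eventually.of_forall fun x => by
                have := hφh_nonneg x; positivity)).symm
        _ = ENNReal.ofReal (I / 3) := by rw [integral_div]
    calc ∫⁻ x, ENNReal.ofReal |h x - 1| ∂Q = ∫⁻ x, (u * v) x ∂Q := by
          simp only [Pi.mul_apply]; exact lintegral_congr fun x => huv x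
      _ ≤ (∫⁻ x, u x ^ (2:ℝ) ∂Q) ^ (1/2 : ℝ) * (∫⁻ x, v x ^ (2:ℝ) ∂Q) ^ (1/2 : ℝ) :=
          ENNReal.lintegral_mul_le_Lp_mul_Lq Q isConjExponent_two_two hmu hmv
      _ ≤ (ENNReal.ofReal (I / 3)) ^ (1/2 : ℝ) * (ENNReal.ofReal 6) ^ (1/2 : ℝ) := by
          gcongr <;> first
            | exact hu2int
            | exact le_of_eq hv2int
      _ = (ENNReal.ofReal (I / 3) * ENNReal.ofReal 6) ^ (1/2 : ℝ) :=
          (ENNReal.mul_rpow_of_nonneg _ _ (by norm_num : (0:ℝ) ≤ 1/2)).symm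
      _ = (ENNReal.ofReal (2 * I)) ^ (1/2 : ℝ) := by
          rw [← ENNReal.ofReal_mul (by positivity)]
          congr 1
          ring
  calc ENNReal.ofReal |∫ x, f x ∂P - ∫ x, f x ∂Q|
      ≤ ENNReal.ofReal (∫ x, |h x - 1| ∂Q) := ENNReal.ofReal_le_ofReal hstepA
    _ ≤ (ENNReal.ofReal (2 * I)) ^ (1/2 : ℝ) := hstepB
    _ = (2 * ENNReal.ofReal (∫ x, llr P Q x ∂P)) ^ (1/2 : ℝ) := by
        rw [hIKL, ENNReal.ofReal_mul (by norm_num : (0:ℝ) ≤ 2)]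
        norm_num

/-- If `Y` is independent of `V`, then the conditional distribution of `Y` given `V` is a.e.
the law of `Y`. -/
lemma condDistrib_eq_map_of_indepFun {Ω β γ : Type*} [MeasurableSpace Ω]
    [MeasurableSpace β] [StandardBorelSpace β] [Nonempty β] [MeasurableSpace γ]
    (μ : Measure Ω) [IsProbabilityMeasure μ] {Y : Ω → β} {V : Ω → γ}
    (hY : Measurable Y) (hV : Measurable V) (hindep : IndepFun V Y μ) :
    ∀ᵐ ω ∂μ, condDistrib Y V μ (V ω) = μ.map Y := by
  have h := condDistrib_ae_eq_of_measure_eq_compProd (μ := μ) V hY.aemeasurable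
    (κ := Kernel.const γ (μ.map Y)) (by
      rw [Measure.compProd_const]
      exact (indepFun_iff_map_prod_eq_prod_map_map hV.aemeasurable hY.aemeasurable).mp hindep)
  have h' := ae_of_ae_map hV.aemeasurable h
  filter_upwards [h'] with ω hω
  rw [hω, Kernel.const_apply]

/-- Key abstract bound: disintegration + conditional symmetry + Pinsker. -/
lemma key_bound {Ω α β γ : Type*} [MeasurableSpace Ω]
    [MeasurableSpace α] [StandardBorelSpace α] [Nonempty α]
    [MeasurableSpace β] [StandardBorelSpace β] [Nonempty β]
    [MeasurableSpace γ]
    (μ : Measure Ω) [IsProbabilityMeasure μ] {X : Ω → α} {Y : Ω → β} {V : Ω → γ}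
    (hX : Measurable X) (hY : Measurable Y) (hV : Measurable V)
    (hindep : IndepFun V Y μ)
    {f : α × β → ℝ} (hf : Measurable f) (hb : ∀ p, |f p| ≤ 1)
    {σ : β → β} (hσ : Measurable σ) (hmapσ : (μ.map Y).map σ = μ.map Y)
    (hanti : ∀ x y, f (x, σ y) = - f (x, y)) :
    ENNReal.ofReal |∫ ω, f (X ω, Y ω) ∂μ|
      ≤ ∫⁻ ω, (2 * dMutualInfo μ X Y V ω) ^ (1/2 : ℝ) ∂μ := by
  set T : Ω → α × β := fun ω => (X ω, Y ω) with hT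
  have hTmeas : Measurable T := hX.prodMk hY
  have hbnorm : ∀ p, ‖f p‖ ≤ 1 := fun p => by simpa using hb p
  have hint : Integrable (fun ω => f (T ω)) μ :=
    ⟨(hf.comp hTmeas).aestronglyMeasurable, HasFiniteIntegral.of_bounded (C := 1)
      (Filter.Eventually.of_forall fun ω => hbnorm _)⟩
  set κ := condDistrib T V μ with hκ
  set g : Ω → ℝ := fun ω => ∫ p, f p ∂κ (V ω) with hg
  have hcomap : MeasurableSpace.comap V inferInstance ≤ (inferInstance : MeasurableSpace Ω) :=
    hV.comap_le
  have h1 : ∫ ω, f (T ω) ∂μ = ∫ ω, g ω ∂μ := by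
    rw [← integral_condExp hcomap (f := fun ω => f (T ω))]
    refine integral_congr_ae ?_
    exact condExp_ae_eq_integral_condDistrib hV hTmeas.aemeasurable hf.stronglyMeasurable hint
  have hgb : ∀ ω, |g ω| ≤ 1 := by
    intro ω
    rw [← Real.norm_eq_abs]
    calc ‖g ω‖ ≤ 1 * ((κ (V ω)) Set.univ).toReal :=
          norm_integral_le_of_norm_le_const (Filter.Eventually.of_forall fun p => hbnorm p)
      _ = 1 := by simp
  have hgm : AEStronglyMeasurable g μ := by
    have h := AEStronglyMeasurable.integral_condDistrib (μ := μ) (X := V) (Y := T)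
      (f := fun p : γ × (α × β) => f p.2)
      hV.aemeasurable hTmeas.aemeasurable ((hf.comp measurable_snd).aestronglyMeasurable)
    exact h.congr (Filter.Eventually.of_forall fun ω => rfl)
  have hgint : Integrable g μ :=
    ⟨hgm, HasFiniteIntegral.of_bounded (C := 1)
      (Filter.Eventually.of_forall fun ω => by simpa using hgb ω)⟩
  have hconst : ∀ᵐ ω ∂μ, condDistrib Y V μ (V ω) = μ.map Y :=
    condDistrib_eq_map_of_indepFun μ hY hV hindep
  have hzero : ∀ᵐ ω ∂μ,
      ∫ p, f p ∂((condDistrib X V μ (V ω)).prod (condDistrib Y V μ (V ω))) = 0 := by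
    filter_upwards [hconst] with ω hω
    rw [hω]
    set m := condDistrib X V μ (V ω) with hm
    set ν := μ.map Y with hν
    have hintprod : Integrable f (m.prod ν) :=
      ⟨hf.aestronglyMeasurable, HasFiniteIntegral.of_bounded (C := 1)
        (Filter.Eventually.of_forall fun p => hbnorm p)⟩
    rw [integral_prod f hintprod]
    have hinner : ∀ x, ∫ y, f (x, y) ∂ν = 0 := by
      intro x
      have hmeasx : Measurable fun y => f (x, y) := hf.comp measurable_prodMk_left
      have e : ∫ y, f (x, y) ∂ν = ∫ y, f (x, σ y) ∂ν := by
        nth_rewrite 1 [← hmapσ]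
        exact integral_map hσ.aemeasurable
          (by rw [hmapσ]; exact hmeasx.aestronglyMeasurable)
      have e2 : ∫ y, f (x, σ y) ∂ν = - ∫ y, f (x, y) ∂ν := by
        rw [← integral_neg]
        exact integral_congr_ae (Filter.Eventually.of_forall fun y => hanti x y)
      have := e.trans e2
      linarith
    simp [hinner]
  have hpoint : ∀ᵐ ω ∂μ, ENNReal.ofReal |g ω| ≤ (2 * dMutualInfo μ X Y V ω) ^ (1/2 : ℝ) := by
    filter_upwards [hzero] with ω hω
    have : |g ω| = |∫ p, f p ∂κ (V ω)
        - ∫ p, f p ∂((condDistrib X V μ (V ω)).prod (condDistrib Y V μ (V ω)))| := by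
      rw [hω, sub_zero]
    rw [this]
    exact pinsker_bound _ _ hf hb
  calc ENNReal.ofReal |∫ ω, f (X ω, Y ω) ∂μ|
      = ENNReal.ofReal |∫ ω, g ω ∂μ| := by rw [← h1]
    _ ≤ ENNReal.ofReal (∫ ω, |g ω| ∂μ) := by
        apply ENNReal.ofReal_le_ofReal
        rw [← Real.norm_eq_abs (∫ ω, g ω ∂μ)]
        exact (norm_integral_le_integral_norm _).trans (le_of_eq (by simp [Real.norm_eq_abs]))
    _ = ∫⁻ ω, ENNReal.ofReal |g ω| ∂μ :=
        ofReal_integral_eq_lintegral_ofReal hgint.abs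
          (Filter.Eventually.of_forall fun ω => abs_nonneg _)
    _ ≤ ∫⁻ ω, (2 * dMutualInfo μ X Y V ω) ^ (1/2 : ℝ) ∂μ := lintegral_mono_ae hpoint

end AuxLemmas


section AuxLemmas2

/-- Clamping to `[-1,1]` is odd. -/
lemma clamp_neg (t : ℝ) : max (-1 : ℝ) (min 1 (-t)) = - max (-1) (min 1 t) := by
  rcases le_total t (-1) with h | h
  · rw [min_eq_right (by linarith : t ≤ (1:ℝ)), max_eq_left h,
      min_eq_left (by linarith : (1:ℝ) ≤ -t), max_eq_right (by norm_num : (-1:ℝ) ≤ 1)]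
    norm_num
  · rcases le_total 1 t with h2 | h2
    · rw [min_eq_left h2, max_eq_right (by norm_num : (-1:ℝ) ≤ 1),
        min_eq_right (by linarith : -t ≤ (1:ℝ)), max_eq_left (by linarith : -t ≤ (-1:ℝ))]
    · rw [min_eq_right h2, max_eq_right h, min_eq_right (by linarith : -t ≤ (1:ℝ)),
        max_eq_right (by linarith : (-1:ℝ) ≤ -t)]

lemma clamp_abs_le (t : ℝ) : |max (-1 : ℝ) (min 1 t)| ≤ 1 := by
  rw [abs_le]
  constructor
  · exact le_max_left _ _
  · exact max_le (by norm_num) (min_le_left _ _)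

lemma clamp_eq {t : ℝ} (h1 : -1 ≤ t) (h2 : t ≤ 1) : max (-1 : ℝ) (min 1 t) = t := by
  rw [min_eq_right h2, max_eq_right h1]

/-- Applying a measurable function at a measurable random index is measurable. -/
lemma meas_eval {Ω β : Type*} [MeasurableSpace Ω] [MeasurableSpace β]
    {g : Ω → Fin 2 → β} {k : Ω → Fin 2} (hg : Measurable g) (hk : Measurable k) :
    Measurable fun ω => g ω (k ω) := by
  have h : Measurable fun p : (Fin 2 → β) × Fin 2 => p.1 p.2 :=
    measurable_from_prod_countable_left fun b => measurable_pi_apply b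
  exact h.comp (hg.prodMk hk)

/-- The uniform measure on a finite type is invariant under any bijection. -/
lemma uniform_toMeasure_map {A : Type*} [MeasurableSpace A] [Fintype A] [Nonempty A]
    [MeasurableSingletonClass A] (e : A → A) (hbij : Function.Bijective e) :
    ((PMF.uniformOfFintype A).toMeasure).map e = (PMF.uniformOfFintype A).toMeasure := by
  have hme : Measurable e := measurable_of_countable e
  rw [PMF.toMeasure_map _ _ hme]
  congr 1
  ext b
  rw [PMF.map_apply]
  set ε := Equiv.ofBijective e hbij with hε
  refine (tsum_eq_single (ε.symm b) ?_).trans ?_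
  · intro a ha
    rw [if_neg]
    intro hba
    apply ha
    have : ε a = b := hba.symm
    rw [← this, Equiv.symm_apply_apply]
  · rw [if_pos (show b = e (ε.symm b) from (ε.apply_symm_apply b).symm)]
    simp [PMF.uniformOfFintype_apply]

lemma fin2_sub_sub : ∀ a : Fin 2, 1 - (1 - a) = a := by decide

end AuxLemmas2

namespace MetaSetup

section Meas

variable {Ω 𝒯 𝒵 𝒰 𝒲 Rh Rb : Type*}
    [MeasurableSpace Ω] [MeasurableSpace 𝒯] [MeasurableSpace 𝒵] [MeasurableSpace 𝒰]
    [MeasurableSpace 𝒲] [MeasurableSpace Rh] [MeasurableSpace Rb]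
    {nt n : ℕ} (M : MetaSetup Ω 𝒯 𝒵 𝒰 𝒲 Rh Rb nt n)

lemma measurable_Zt_apply (i : Fin nt) (k : Fin 2) (j : Fin n) (l : Fin 2) :
    Measurable fun ω => M.Zt ω i k j l :=
  (measurable_pi_apply l).comp <| (measurable_pi_apply j).comp <|
    (measurable_pi_apply k).comp <| (measurable_pi_apply i).comp M.meas_Zt

lemma measurable_Sh_apply (i : Fin nt) : Measurable fun ω => M.Sh ω i :=
  (measurable_pi_apply i).comp M.meas_Sh

lemma measurable_S_apply (i : Fin nt) (k : Fin 2) (j : Fin n) :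
    Measurable fun ω => M.S ω i k j :=
  (measurable_pi_apply j).comp <| (measurable_pi_apply k).comp <|
    (measurable_pi_apply i).comp M.meas_S

lemma measurable_Zt_train (i : Fin nt) (k : Fin 2) (j : Fin n) :
    Measurable fun ω => M.Zt ω i k j (M.S ω i k j) :=
  meas_eval (g := fun ω l => M.Zt ω i k j l)
    (measurable_pi_lambda _ fun l => M.measurable_Zt_apply i k j l) (M.measurable_S_apply i k j)

lemma measurable_U : Measurable M.U := by
  have hmeta : Measurable fun ω => fun i' j' =>
      M.Zt ω i' (M.Sh ω i') j' (M.S ω i' (M.Sh ω i') j') := by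
    refine measurable_pi_lambda _ fun i' => measurable_pi_lambda _ fun j' => ?_
    exact meas_eval (g := fun ω k => M.Zt ω i' k j' (M.S ω i' k j'))
      (measurable_pi_lambda _ fun k => M.measurable_Zt_train i' k j')
      (M.measurable_Sh_apply i')
  exact M.meas_A.comp (hmeta.prodMk M.meas_Rhat)

lemma measurable_W (i : Fin nt) (k : Fin 2) : Measurable (M.W i k) := by
  have htrain : Measurable fun ω => fun j' => M.Zt ω i k j' (M.S ω i k j') :=
    measurable_pi_lambda _ fun j' => M.measurable_Zt_train i k j'
  have hRi : Measurable fun ω => M.R ω i := (measurable_pi_apply i).comp M.meas_R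
  exact M.meas_B.comp (htrain.prodMk (hRi.prodMk M.measurable_U))

lemma measurable_lam (i : Fin nt) (k : Fin 2) (j : Fin n) (l : Fin 2) :
    Measurable (M.lam i k j l) :=
  M.meas_loss.comp ((M.measurable_W i k).prodMk (M.measurable_Zt_apply i k j l))

lemma measurable_lamX (i : Fin nt) (j : Fin n) :
    Measurable fun ω => fun k l : Fin 2 => M.lam i k j l ω :=
  measurable_pi_lambda _ fun k => measurable_pi_lambda _ fun l => M.measurable_lam i k j l

lemma measurable_lam_rand (i : Fin nt) (j : Fin n) {k l : Ω → Fin 2}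
    (hk : Measurable k) (hl : Measurable l) :
    Measurable fun ω => M.lam i (k ω) j (l ω) ω := by
  have h1 : Measurable fun ω => (fun l' : Fin 2 => M.lam i (k ω) j l' ω) :=
    meas_eval (g := fun ω => fun k' l' : Fin 2 => M.lam i k' j l' ω) (M.measurable_lamX i j) hk
  exact meas_eval (g := fun ω => fun l' : Fin 2 => M.lam i (k ω) j l' ω) h1 hl

lemma lam_mem (i : Fin nt) (k : Fin 2) (j : Fin n) (l : Fin 2) (ω : Ω) :
    M.lam i k j l ω ∈ Set.Icc (0:ℝ) 1 := M.loss_mem _ _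

end Meas

end MetaSetup


section PerIJ

variable {Ω 𝒯 𝒵 𝒰 𝒲 Rh Rb : Type*}
    [MeasurableSpace Ω] [MeasurableSpace 𝒯] [MeasurableSpace 𝒵] [MeasurableSpace 𝒰]
    [MeasurableSpace 𝒲] [MeasurableSpace Rh] [MeasurableSpace Rb]
    {nt n : ℕ} (M : MetaSetup Ω 𝒯 𝒵 𝒰 𝒲 Rh Rb nt n)

/-- The single-(i,j) bound. -/
lemma MetaSetup.per_ij (i : Fin nt) (j : Fin n) :
    ENNReal.ofReal |∫ ω, (M.lam i (1 - M.Sh ω i) j (1 - M.S ω i (1 - M.Sh ω i) j) ω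
        - M.lam i (M.Sh ω i) j (M.S ω i (M.Sh ω i) j) ω) ∂M.μ|
      ≤ ∫⁻ ω, (2 * dMutualInfo M.μ
          (fun ω' => fun k l : Fin 2 => M.lam i k j l ω')
          (fun ω' => (M.Sh ω' i, fun k : Fin 2 => M.S ω' i k j))
          (fun ω' => M.Zt ω') ω) ^ (1/2 : ℝ) ∂M.μ := by
  classical
  set X : Ω → Fin 2 → Fin 2 → ℝ := fun ω' => fun k l : Fin 2 => M.lam i k j l ω' with hXdef
  set Y : Ω → Fin 2 × (Fin 2 → Fin 2) :=
    fun ω' => (M.Sh ω' i, fun k : Fin 2 => M.S ω' i k j) with hYdef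
  set V : Ω → (Fin nt → Fin 2 → Fin n → Fin 2 → 𝒵) := fun ω' => M.Zt ω' with hVdef
  set f : (Fin 2 → Fin 2 → ℝ) × (Fin 2 × (Fin 2 → Fin 2)) → ℝ :=
    fun p => max (-1) (min 1
      (p.1 (1 - p.2.1) (1 - p.2.2 (1 - p.2.1)) - p.1 p.2.1 (p.2.2 p.2.1))) with hfdef
  set σ : Fin 2 × (Fin 2 → Fin 2) → Fin 2 × (Fin 2 → Fin 2) :=
    fun q => (1 - q.1, fun k => 1 - q.2 k) with hσdef
  have hX : Measurable X := M.measurable_lamX i j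
  have hY : Measurable Y := (M.measurable_Sh_apply i).prodMk
    (measurable_pi_lambda _ fun k => M.measurable_S_apply i k j)
  have hV : Measurable V := M.meas_Zt
  have hf0 : Measurable (fun p : (Fin 2 → Fin 2 → ℝ) × (Fin 2 × (Fin 2 → Fin 2)) =>
      p.1 (1 - p.2.1) (1 - p.2.2 (1 - p.2.1)) - p.1 p.2.1 (p.2.2 p.2.1)) :=
    measurable_from_prod_countable_left fun q => by
      dsimp only; fun_prop
  have hf : Measurable f := measurable_const.max (measurable_const.min hf0)
  have hb : ∀ p, |f p| ≤ 1 := fun p => clamp_abs_le _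
  have hσm : Measurable σ := measurable_of_countable σ
  have hanti : ∀ x y, f (x, σ y) = - f (x, y) := by
    intro x y
    show max (-1:ℝ) (min 1 (x (1 - (1 - y.1)) (1 - (1 - y.2 (1 - (1 - y.1))))
        - x (1 - y.1) (1 - y.2 (1 - y.1)))) = _
    rw [fin2_sub_sub y.1, fin2_sub_sub (y.2 y.1)]
    rw [show x y.1 (y.2 y.1) - x (1 - y.1) (1 - y.2 (1 - y.1))
        = -(x (1 - y.1) (1 - y.2 (1 - y.1)) - x y.1 (y.2 y.1)) from by ring]
    exact clamp_neg _
  -- independence of V and Y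
  have hindep : IndepFun V Y M.μ := by
    have hψ : Measurable fun p : ((Fin nt → Fin 2) × (Fin nt → Fin 2 → Fin n → Fin 2))
        × (Rh × (Fin nt → Rb)) => ((p.1).1 i, fun k : Fin 2 => (p.1).2 i k j) :=
      ((measurable_pi_apply i).comp (measurable_fst.comp measurable_fst)).prodMk
        (measurable_pi_lambda _ fun k => (measurable_pi_apply j).comp <|
          (measurable_pi_apply k).comp <| (measurable_pi_apply i).comp
            (measurable_snd.comp measurable_fst))
    exact M.indep₁.comp measurable_id hψ
  -- invariance of the law of Y under σ
  have hmapσ : (M.μ.map Y).map σ = M.μ.map Y := by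
    have hpair : Measurable fun ω => (M.Sh ω, M.S ω) := M.meas_Sh.prodMk M.meas_S
    set gfun : (Fin nt → Fin 2) × (Fin nt → Fin 2 → Fin n → Fin 2) → Fin 2 × (Fin 2 → Fin 2) :=
      fun q => (q.1 i, fun k => q.2 i k j) with hgdef
    have hg : Measurable gfun := ((measurable_pi_apply i).comp measurable_fst).prodMk
      (measurable_pi_lambda _ fun k => (measurable_pi_apply j).comp <|
        (measurable_pi_apply k).comp <| (measurable_pi_apply i).comp measurable_snd)
    set u1 := (PMF.uniformOfFintype (Fin nt → Fin 2)).toMeasure with hu1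
    set u2 := (PMF.uniformOfFintype (Fin nt → Fin 2 → Fin n → Fin 2)).toMeasure with hu2
    set T1 : (Fin nt → Fin 2) → (Fin nt → Fin 2) := fun a => fun i' => 1 - a i' with hT1def
    set T2 : (Fin nt → Fin 2 → Fin n → Fin 2) → (Fin nt → Fin 2 → Fin n → Fin 2) :=
      fun b => fun i' k j' => 1 - b i' k j' with hT2def
    have hT1m : Measurable T1 := measurable_pi_lambda _ fun i' =>
      (measurable_of_countable _).comp (measurable_pi_apply i')
    have hT2m : Measurable T2 := measurable_pi_lambda _ fun i' =>
      measurable_pi_lambda _ fun k => measurable_pi_lambda _ fun j' =>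
        (measurable_of_countable _).comp ((measurable_pi_apply j').comp <|
          (measurable_pi_apply k).comp (measurable_pi_apply i'))
    have hT1bij : Function.Bijective T1 := Function.Involutive.bijective
      (fun a => funext fun i' => fin2_sub_sub _)
    have hT2bij : Function.Bijective T2 := Function.Involutive.bijective
      (fun b => funext fun i' => funext fun k => funext fun j' => fin2_sub_sub _)
    have hT : Measurable (Prod.map T1 T2) := hT1m.prodMap hT2m
    have hYg : M.μ.map Y = (u1.prod u2).map gfun := by
      rw [hu1, hu2, ← M.law_S, Measure.map_map hg hpair]
      rfl
    calc (M.μ.map Y).map σ = ((u1.prod u2).map gfun).map σ := by rw [hYg]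
      _ = (u1.prod u2).map (σ ∘ gfun) := Measure.map_map hσm hg
      _ = (u1.prod u2).map (gfun ∘ Prod.map T1 T2) := rfl
      _ = ((u1.prod u2).map (Prod.map T1 T2)).map gfun := (Measure.map_map hg hT).symm
      _ = ((u1.map T1).prod (u2.map T2)).map gfun := by
          rw [Measure.map_prod_map _ _ hT1m hT2m]
      _ = (u1.prod u2).map gfun := by
          rw [hu1, hu2, uniform_toMeasure_map T1 hT1bij, uniform_toMeasure_map T2 hT2bij]
      _ = M.μ.map Y := hYg.symm
  have hkey := key_bound M.μ hX hY hV hindep hf hb hσm hmapσ hanti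
  have hptwise : ∀ ω, f (X ω, Y ω)
      = M.lam i (1 - M.Sh ω i) j (1 - M.S ω i (1 - M.Sh ω i) j) ω
        - M.lam i (M.Sh ω i) j (M.S ω i (M.Sh ω i) j) ω := by
    intro ω
    have h1 := M.lam_mem i (1 - M.Sh ω i) j (1 - M.S ω i (1 - M.Sh ω i) j) ω
    have h2 := M.lam_mem i (M.Sh ω i) j (M.S ω i (M.Sh ω i) j) ω
    show max (-1:ℝ) (min 1 (M.lam i (1 - M.Sh ω i) j (1 - M.S ω i (1 - M.Sh ω i) j) ω
        - M.lam i (M.Sh ω i) j (M.S ω i (M.Sh ω i) j) ω)) = _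
    exact clamp_eq (by obtain ⟨a1, b1⟩ := h1; obtain ⟨a2, b2⟩ := h2; linarith)
      (by obtain ⟨a1, b1⟩ := h1; obtain ⟨a2, b2⟩ := h2; linarith)
  have heq : ∫ ω, (M.lam i (1 - M.Sh ω i) j (1 - M.S ω i (1 - M.Sh ω i) j) ω
      - M.lam i (M.Sh ω i) j (M.S ω i (M.Sh ω i) j) ω) ∂M.μ = ∫ ω, f (X ω, Y ω) ∂M.μ :=
    integral_congr_ae (Filter.Eventually.of_forall fun ω => (hptwise ω).symm)
  rw [heq]
  exact hkey

end PerIJ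


open MetaSetup in
/-- **One-step square-root bound (Theorem 2).**
`|L̄_pop − L̂_train| ≤ (1/(n·n̂)) Σ_{i,j} E_{Z̃}[ sqrt( 2 I^{Z̃}(λ^{(i)}_j; Ŝ_i, S^{(i)}_j) ) ]`. -/
theorem one_step_sqrt_bound
    {Ω 𝒯 𝒵 𝒰 𝒲 Rh Rb : Type*}
    [MeasurableSpace Ω] [MeasurableSpace 𝒯] [MeasurableSpace 𝒵] [MeasurableSpace 𝒰]
    [MeasurableSpace 𝒲] [MeasurableSpace Rh] [MeasurableSpace Rb]
    {nt n : ℕ} (M : MetaSetup Ω 𝒯 𝒵 𝒰 𝒲 Rh Rb nt n) :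
    ENNReal.ofReal |M.Lpop - M.Ltrain|
      ≤ ((n * nt : ℕ) : ℝ≥0∞)⁻¹ * ∑ i : Fin nt, ∑ j : Fin n,
          ∫⁻ ω, (2 * dMutualInfo M.μ
              (fun ω' => fun k l : Fin 2 => M.lam i k j l ω')
              (fun ω' => (M.Sh ω' i, fun k : Fin 2 => M.S ω' i k j))
              (fun ω' => M.Zt ω') ω) ^ (1/2 : ℝ) ∂M.μ := by
  classical
  rcases Nat.eq_zero_or_pos (n * nt) with h0 | hpos
  · -- degenerate case: no samples or no tasks
    have hz : M.Lpop - M.Ltrain = 0 := by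
      rcases Nat.mul_eq_zero.mp h0 with hn | hnt
      · subst hn
        simp [MetaSetup.Lpop, MetaSetup.Ltrain]
      · subst hnt
        simp [MetaSetup.Lpop, MetaSetup.Ltrain]
    rw [hz]
    simp
  -- nondegenerate case
  set c : ℝ := ((n:ℝ) * (nt:ℝ))⁻¹ with hc
  have hcnn : 0 ≤ c := by positivity
  -- integrability of all four loss terms
  have hmeas_pop : ∀ (i : Fin nt) (j : Fin n), Measurable fun ω =>
      M.lam i (1 - M.Sh ω i) j (1 - M.S ω i (1 - M.Sh ω i) j) ω := by
    intro i j
    have hk : Measurable fun ω => 1 - M.Sh ω i :=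
      (measurable_of_countable (fun a : Fin 2 => 1 - a)).comp (M.measurable_Sh_apply i)
    have hl : Measurable fun ω => 1 - M.S ω i (1 - M.Sh ω i) j :=
      (measurable_of_countable (fun a : Fin 2 => 1 - a)).comp
        (meas_eval (g := fun ω k => M.S ω i k j)
          (measurable_pi_lambda _ fun k => M.measurable_S_apply i k j) hk)
    exact M.measurable_lam_rand i j hk hl
  have hmeas_train : ∀ (i : Fin nt) (j : Fin n), Measurable fun ω =>
      M.lam i (M.Sh ω i) j (M.S ω i (M.Sh ω i) j) ω := by
    intro i j
    have hk : Measurable fun ω => M.Sh ω i := M.measurable_Sh_apply i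
    have hl : Measurable fun ω => M.S ω i (M.Sh ω i) j :=
      meas_eval (g := fun ω k => M.S ω i k j)
        (measurable_pi_lambda _ fun k => M.measurable_S_apply i k j) hk
    exact M.measurable_lam_rand i j hk hl
  have hint_of_meas : ∀ {g : Ω → ℝ}, Measurable g → (∀ ω, g ω ∈ Set.Icc (0:ℝ) 1) →
      Integrable g M.μ := by
    intro g hg hmem
    exact ⟨hg.aestronglyMeasurable, HasFiniteIntegral.of_bounded (C := 1)
      (Filter.Eventually.of_forall fun ω => by
        rw [Real.norm_eq_abs, abs_le]
        exact ⟨by linarith [(hmem ω).1], (hmem ω).2⟩)⟩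
  have hint_pop : ∀ (i : Fin nt) (j : Fin n), Integrable (fun ω =>
      M.lam i (1 - M.Sh ω i) j (1 - M.S ω i (1 - M.Sh ω i) j) ω) M.μ :=
    fun i j => hint_of_meas (hmeas_pop i j) (fun ω => M.lam_mem _ _ _ _ ω)
  have hint_train : ∀ (i : Fin nt) (j : Fin n), Integrable (fun ω =>
      M.lam i (M.Sh ω i) j (M.S ω i (M.Sh ω i) j) ω) M.μ :=
    fun i j => hint_of_meas (hmeas_train i j) (fun ω => M.lam_mem _ _ _ _ ω)
  -- difference of the sums
  set D : Fin nt → Fin n → ℝ := fun i j =>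
    ∫ ω, (M.lam i (1 - M.Sh ω i) j (1 - M.S ω i (1 - M.Sh ω i) j) ω
      - M.lam i (M.Sh ω i) j (M.S ω i (M.Sh ω i) j) ω) ∂M.μ with hD
  have hdiff : M.Lpop - M.Ltrain = c * ∑ i : Fin nt, ∑ j : Fin n, D i j := by
    rw [MetaSetup.Lpop, MetaSetup.Ltrain, ← mul_sub, ← Finset.sum_sub_distrib]
    congr 1
    refine Finset.sum_congr rfl fun i _ => ?_
    rw [← Finset.sum_sub_distrib]
    refine Finset.sum_congr rfl fun j _ => ?_
    exact (integral_sub (hint_pop i j) (hint_train i j)).symm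
  -- the per-(i,j) bound
  set L : Fin nt → Fin n → ℝ≥0∞ := fun i j =>
    ∫⁻ ω, (2 * dMutualInfo M.μ
        (fun ω' => fun k l : Fin 2 => M.lam i k j l ω')
        (fun ω' => (M.Sh ω' i, fun k : Fin 2 => M.S ω' i k j))
        (fun ω' => M.Zt ω') ω) ^ (1/2 : ℝ) ∂M.μ with hL
  have hkey : ∀ (i : Fin nt) (j : Fin n), ENNReal.ofReal |D i j| ≤ L i j :=
    fun i j => M.per_ij i j
  -- assemble
  have habs : |M.Lpop - M.Ltrain| ≤ c * ∑ i : Fin nt, ∑ j : Fin n, |D i j| := by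
    rw [hdiff, abs_mul, abs_of_nonneg hcnn]
    apply mul_le_mul_of_nonneg_left _ hcnn
    refine (Finset.abs_sum_le_sum_abs _ _).trans ?_
    refine Finset.sum_le_sum fun i _ => ?_
    exact Finset.abs_sum_le_sum_abs _ _
  have hcoef : ENNReal.ofReal c = ((n * nt : ℕ) : ℝ≥0∞)⁻¹ := by
    have h1 : c = (((n * nt : ℕ) : ℝ))⁻¹ := by rw [hc]; push_cast; ring
    rw [h1, ENNReal.ofReal_inv_of_pos (by exact_mod_cast hpos), ENNReal.ofReal_natCast]
  calc ENNReal.ofReal |M.Lpop - M.Ltrain|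
      ≤ ENNReal.ofReal (c * ∑ i : Fin nt, ∑ j : Fin n, |D i j|) :=
        ENNReal.ofReal_le_ofReal habs
    _ = ENNReal.ofReal c * ENNReal.ofReal (∑ i : Fin nt, ∑ j : Fin n, |D i j|) :=
        ENNReal.ofReal_mul hcnn
    _ = ENNReal.ofReal c * ∑ i : Fin nt, ∑ j : Fin n, ENNReal.ofReal |D i j| := by
        rw [ENNReal.ofReal_sum_of_nonneg (fun i _ => Finset.sum_nonneg fun j _ => abs_nonneg _)]
        congr 1
        refine Finset.sum_congr rfl fun i _ => ?_
        exact ENNReal.ofReal_sum_of_nonneg (fun j _ => abs_nonneg _)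
    _ ≤ ENNReal.ofReal c * ∑ i : Fin nt, ∑ j : Fin n, L i j := by
        apply mul_le_mul_right
        exact Finset.sum_le_sum fun i _ => Finset.sum_le_sum fun j _ => hkey i j
    _ = ((n * nt : ℕ) : ℝ≥0∞)⁻¹ * ∑ i : Fin nt, ∑ j : Fin n, L i j := by rw [hcoef]
end
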